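/- (Properties of the cosine model space.) The set J(ℱ), equipped with the subspace topology induced from τ_ℳ, is a locally compact, Hausdorff, second-countable topological space; consequently its one-point compactification J(ℱ) ∪ {∞} is a first-countable, hence sequential, space. -/

import Mathlib

/-- The space of external addresses `(ℤ × {L,R})^ℕ`, with `L, R` encoded by
`false, true : Bool`. -/
def CSeq : Type := ℕ → ℤ × Bool

/-- The linear order on `ℤ × {L,R}`: `(n,*) < (m,⋆)` iff `* = ⋆ = R` and `n < m`,
or `* = ⋆ = L` and `m < n`, or `* = L` and `⋆ = R`. -/
def symbLt : ℤ × Bool → ℤ × Bool → Prop := fun p q =>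
  (p.2 = true ∧ q.2 = true ∧ p.1 < q.1) ∨
    (p.2 = false ∧ q.2 = false ∧ q.1 < p.1) ∨
    (p.2 = false ∧ q.2 = true)

/-- The induced lexicographic order `<ₗ` on `(ℤ × {L,R})^ℕ`. -/
def lexLt (s t : CSeq) : Prop :=
  ∃ n : ℕ, (∀ k < n, s k = t k) ∧ symbLt (s n) (t n)

/-- The cyclic order `[s, a, t]` induced by `<ₗ`. -/
def cycBtw (s a t : CSeq) : Prop :=
  (lexLt s a ∧ lexLt a t) ∨ (lexLt a t ∧ lexLt t s) ∨ (lexLt t s ∧ lexLt s a)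

/-- The open interval `(s, t)` of the cyclic order. -/
def cycInterval (s t : CSeq) : Set CSeq := {x | cycBtw s x t}

/-- The cyclic order topology on `(ℤ × {L,R})^ℕ`, generated by the open
intervals of the cyclic order. -/
instance : TopologicalSpace CSeq :=
  TopologicalSpace.generateFrom {I | ∃ s t : CSeq, I = cycInterval s t}

lemma symbLt_irrefl (p : ℤ × Bool) : ¬ symbLt p p := by
  rcases p with ⟨n, b⟩; cases b <;> simp [symbLt]

lemma symbLt_asymm {p q : ℤ × Bool} (h : symbLt p q) : ¬ symbLt q p := by
  rcases p with ⟨n, b⟩; rcases q with ⟨m, c⟩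
  cases b <;> cases c <;> simp [symbLt] at h ⊢ <;> omega

lemma lexLt_asymm {s t : CSeq} (h : lexLt s t) : ¬ lexLt t s := by
  rintro ⟨m', h', hs'⟩
  obtain ⟨m, h, hs⟩ := h
  rcases lt_trichotomy m m' with hlt | rfl | hlt
  · rw [h' m hlt] at hs; exact symbLt_irrefl _ hs
  · exact symbLt_asymm hs hs'
  · rw [h m' hlt] at hs'; exact symbLt_irrefl _ hs'

def symbSucc (p : ℤ × Bool) : ℤ × Bool := (if p.2 then p.1 + 1 else p.1 - 1, p.2)
def symbPred (p : ℤ × Bool) : ℤ × Bool := (if p.2 then p.1 - 1 else p.1 + 1, p.2)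

lemma symbLt_pred (p : ℤ × Bool) : symbLt (symbPred p) p := by
  rcases p with ⟨n, b⟩; cases b <;> simp [symbLt, symbPred]

lemma symbLt_succ (p : ℤ × Bool) : symbLt p (symbSucc p) := by
  rcases p with ⟨n, b⟩; cases b <;> simp [symbLt, symbSucc]

lemma symbLt_pred_succ (p : ℤ × Bool) : symbLt (symbPred p) (symbSucc p) := by
  rcases p with ⟨n, b⟩; cases b <;> simp [symbLt, symbSucc, symbPred] <;> omega

open TopologicalSpace Set Filter Topology

/-- Cylinder: sequences agreeing with `t` up to index `n`. -/
def cyl (t : CSeq) (n : ℕ) : Set CSeq := {x | ∀ i ≤ n, x i = t i}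

lemma exists_interval_subset_cyl (t : CSeq) (n : ℕ) :
    ∃ a b : CSeq, t ∈ cycInterval a b ∧ cycInterval a b ⊆ cyl t n := by
  classical
  set a : CSeq := Function.update t (n + 1) (symbPred (t (n + 1))) with ha
  set b : CSeq := Function.update t (n + 1) (symbSucc (t (n + 1))) with hb
  have haeq : ∀ i, i ≠ n + 1 → a i = t i := fun i hi => Function.update_of_ne hi _ _
  have hbeq : ∀ i, i ≠ n + 1 → b i = t i := fun i hi => Function.update_of_ne hi _ _
  have han1 : a (n + 1) = symbPred (t (n + 1)) := Function.update_self _ _ _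
  have hbn1 : b (n + 1) = symbSucc (t (n + 1)) := Function.update_self _ _ _
  have hat : lexLt a t := by
    refine ⟨n + 1, fun k hk => haeq k (by omega), ?_⟩
    rw [han1]; exact symbLt_pred _
  have htb : lexLt t b := by
    refine ⟨n + 1, fun k hk => (hbeq k (by omega)).symm, ?_⟩
    rw [hbn1]; exact symbLt_succ _
  have hab : lexLt a b := by
    refine ⟨n + 1, fun k hk => by rw [haeq k (by omega), hbeq k (by omega)], ?_⟩
    rw [han1, hbn1]; exact symbLt_pred_succ _
  refine ⟨a, b, Or.inl ⟨hat, htb⟩, ?_⟩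
  rintro x (⟨hax, hxb⟩ | ⟨_, hba⟩ | ⟨hba, _⟩)
  · -- main case : a <ₗ x <ₗ b
    obtain ⟨m1, h1, hs1⟩ := hax
    obtain ⟨m2, h2, hs2⟩ := hxb
    -- claim m1 ≥ n+1
    by_cases hm1 : n + 1 ≤ m1
    · intro i hi
      have := (h1 i (by omega)).symm
      rw [this, haeq i (by omega)]
    · exfalso
      push_neg at hm1
      have ham1 : a m1 = t m1 := haeq m1 (by omega)
      rcases lt_trichotomy m2 m1 with hc | heq | hc
      · have hx2 : x m2 = a m2 := (h1 m2 hc).symm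
        have hb2 : b m2 = t m2 := hbeq m2 (by omega)
        have ha2 : a m2 = t m2 := haeq m2 (by omega)
        rw [hx2, ha2, hb2] at hs2
        exact symbLt_irrefl _ hs2
      · subst heq
        rw [ham1] at hs1
        have hb1 : b m2 = t m2 := hbeq m2 (by omega)
        rw [hb1] at hs2
        exact symbLt_asymm hs1 hs2
      · have hx1 : x m1 = b m1 := h2 m1 hc
        have hb1 : b m1 = t m1 := hbeq m1 (by omega)
        rw [hx1, hb1, ham1] at hs1
        exact symbLt_irrefl _ hs1
  · exact absurd hba (lexLt_asymm hab)
  · exact absurd hba (lexLt_asymm hab)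

lemma isOpen_cycInterval (s t : CSeq) : IsOpen (cycInterval s t) :=
  TopologicalSpace.isOpen_generateFrom_of_mem ⟨s, t, rfl⟩

lemma isOpen_cyl (t : CSeq) (n : ℕ) : IsOpen (cyl t n) := by
  rw [isOpen_iff_forall_mem_open]
  intro x hx
  obtain ⟨a, b, hmem, hsub⟩ := exists_interval_subset_cyl x n
  refine ⟨cycInterval a b, fun y hy => ?_, isOpen_cycInterval a b, hmem⟩
  intro i hi
  rw [hsub hy i hi, hx i hi]

lemma isOpen_coord (n : ℕ) (c : ℤ × Bool) : IsOpen {x : CSeq | x n = c} := by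
  rw [isOpen_iff_forall_mem_open]
  intro x hx
  exact ⟨cyl x n, fun y hy => by rw [Set.mem_setOf_eq, hy n le_rfl, hx], isOpen_cyl x n, fun i _ => rfl⟩

section PiSide

lemma isOpenPi_lexLt_left (a : CSeq) : IsOpen {x : ℕ → ℤ × Bool | lexLt a x} := by
  rw [isOpen_iff_forall_mem_open]
  intro x hx
  obtain ⟨m, h, hs⟩ := hx
  refine ⟨⋂ k ∈ Finset.range (m + 1), {y : ℕ → ℤ × Bool | y k = x k}, ?_, ?_, ?_⟩
  · intro y hy
    simp only [Set.mem_iInter, Set.mem_setOf_eq, Finset.mem_range] at hy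
    exact ⟨m, fun k hk => by rw [hy k (by omega)]; exact h k hk, by rw [hy m (by omega)]; exact hs⟩
  · refine isOpen_biInter_finset fun k _ => ?_
    show IsOpen ((fun y : ℕ → ℤ × Bool => y k) ⁻¹' {x k})
    exact (continuous_apply k).isOpen_preimage _ (isOpen_discrete _)
  · simp

lemma isOpenPi_lexLt_right (a : CSeq) : IsOpen {x : ℕ → ℤ × Bool | lexLt x a} := by
  rw [isOpen_iff_forall_mem_open]
  intro x hx
  obtain ⟨m, h, hs⟩ := hx
  refine ⟨⋂ k ∈ Finset.range (m + 1), {y : ℕ → ℤ × Bool | y k = x k}, ?_, ?_, ?_⟩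
  · intro y hy
    simp only [Set.mem_iInter, Set.mem_setOf_eq, Finset.mem_range] at hy
    exact ⟨m, fun k hk => by rw [hy k (by omega)]; exact h k hk, by rw [hy m (by omega)]; exact hs⟩
  · refine isOpen_biInter_finset fun k _ => ?_
    show IsOpen ((fun y : ℕ → ℤ × Bool => y k) ⁻¹' {x k})
    exact (continuous_apply k).isOpen_preimage _ (isOpen_discrete _)
  · simp

lemma isOpenPi_cycInterval (s t : CSeq) : IsOpen {x : ℕ → ℤ × Bool | cycBtw s x t} := by
  have e : {x : ℕ → ℤ × Bool | cycBtw s x t} =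
      ({x : ℕ → ℤ × Bool | lexLt s x} ∩ {x : ℕ → ℤ × Bool | lexLt x t}) ∪
        (({x : ℕ → ℤ × Bool | lexLt x t} ∩ {x | lexLt t s}) ∪
          ({x : ℕ → ℤ × Bool | lexLt t s} ∩ {x | lexLt s x})) := by
    ext x
    simp only [Set.mem_setOf_eq, Set.mem_union, Set.mem_inter_iff, cycBtw]
    exact Iff.rfl
  rw [e]
  by_cases hts : lexLt t s
  · have e1 : {x : ℕ → ℤ × Bool | lexLt t s} = Set.univ := by
      ext x; simp [hts]
    rw [e1]
    exact ((isOpenPi_lexLt_left s).inter (isOpenPi_lexLt_right t)).union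
      (((isOpenPi_lexLt_right t).inter isOpen_univ).union
        (isOpen_univ.inter (isOpenPi_lexLt_left s)))
  · have e1 : {x : ℕ → ℤ × Bool | lexLt t s} = (∅ : Set (ℕ → ℤ × Bool)) := by
      ext x; simp [hts]
    rw [e1]
    simp only [Set.inter_empty, Set.empty_inter, Set.union_empty]
    exact (isOpenPi_lexLt_left s).inter (isOpenPi_lexLt_right t)

end PiSide

lemma csTop_eq :
    instTopologicalSpaceCSeq = (Pi.topologicalSpace : TopologicalSpace (ℕ → ℤ × Bool)) := by
  apply le_antisymm
  · refine (continuous_id_iff_le (α := ℕ → ℤ × Bool)).mp ?_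
    exact continuous_pi (X := CSeq) (f := (id : CSeq → ℕ → ℤ × Bool)) fun n => continuous_discrete_rng.mpr fun c => isOpen_coord n c
  · exact le_generateFrom (by rintro I ⟨s, t, rfl⟩; exact isOpenPi_cycInterval s t)

instance : T2Space CSeq := by
  rw [csTop_eq]
  exact inferInstanceAs (T2Space (ℕ → ℤ × Bool))

instance : SecondCountableTopology CSeq := by
  rw [csTop_eq]
  exact inferInstanceAs (SecondCountableTopology (ℕ → ℤ × Bool))

lemma continuous_eval (n : ℕ) : Continuous fun s : CSeq => s n :=
  continuous_discrete_rng.mpr fun c => isOpen_coord n c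

lemma continuous_into_CSeq {X : Type*} [TopologicalSpace X] {f : X → CSeq}
    (h : ∀ n, Continuous fun x => f x n) : Continuous f := by
  rw [continuous_iff_le_induced, csTop_eq]
  exact (continuous_iff_le_induced (β := ℕ → ℤ × Bool)).mp (continuous_pi h)


/-- The model map `ℱ(t,s) = (e^t − 1 − 2π|s₁|, σ(s))`, where `σ` is the one-sided
shift and `|s₁|` is the absolute value of the integer part of the second entry
of `s`. -/
noncomputable def modelF : ℝ × CSeq → ℝ × CSeq := fun p =>
  (Real.exp p.1 - 1 - 2 * Real.pi * |(((p.2 1).1 : ℤ) : ℝ)|, fun n => p.2 (n + 1))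

/-- The model Julia set `J(ℱ) = {x ∈ ℳ : T(ℱⁿ(x)) ≥ 0 for all n ≥ 0}` (the
condition for `n = 0` says exactly that the first coordinate lies in `[0,∞)`). -/
def modelJ : Set (ℝ × CSeq) := {p | ∀ n : ℕ, 0 ≤ (modelF^[n] p).1}

lemma continuous_modelF : Continuous modelF := by
  have hc0 : Continuous fun p : ℝ × CSeq => (p.2 1).1 :=
    continuous_fst.comp ((continuous_eval 1).comp continuous_snd)
  have hc1 : Continuous fun p : ℝ × CSeq => (((p.2 1).1 : ℤ) : ℝ) :=
    (continuous_of_discreteTopology (f := fun z : ℤ => (z : ℝ))).comp hc0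
  refine Continuous.prodMk ?_
    (continuous_into_CSeq fun n => (continuous_eval (n + 1)).comp continuous_snd)
  exact ((Real.continuous_exp.comp continuous_fst).sub continuous_const).sub
    (continuous_const.mul hc1.abs)

lemma isClosed_modelJ : IsClosed modelJ := by
  have h : modelJ = ⋂ n : ℕ, (fun p => (modelF^[n] p).1) ⁻¹' Set.Ici 0 := by
    ext p
    simp [modelJ, Set.mem_iInter, Set.mem_preimage, Set.mem_Ici]
  rw [h]
  exact isClosed_iInter fun n =>
    IsClosed.preimage (continuous_fst.comp (continuous_modelF.iterate n)) isClosed_Ici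

lemma iter_snd (p : ℝ × CSeq) (k : ℕ) : ∀ n, (modelF^[k] p).2 n = p.2 (n + k) := by
  induction k with
  | zero => intro n; rfl
  | succ k ih =>
    intro n
    rw [Function.iterate_succ_apply']
    show (modelF^[k] p).2 (n + 1) = p.2 (n + (k + 1))
    rw [ih (n + 1)]
    have h6 : n + 1 + k = n + (k + 1) := by omega
    rw [h6]

lemma iter_fst_succ (p : ℝ × CSeq) (k : ℕ) :
    (modelF^[k + 1] p).1 =
      Real.exp ((modelF^[k] p).1) - 1 - 2 * Real.pi * |(((p.2 (1 + k)).1 : ℤ) : ℝ)| := by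
  rw [Function.iterate_succ_apply']
  show Real.exp ((modelF^[k] p).1) - 1 - 2 * Real.pi * |((((modelF^[k] p).2 1).1 : ℤ) : ℝ)| = _
  rw [iter_snd p k 1]

noncomputable def towerB (b : ℝ) : ℕ → ℝ
  | 0 => b
  | n + 1 => Real.exp (towerB b n)

lemma iter_fst_le {p : ℝ × CSeq} {b : ℝ} (hb : p.1 ≤ b) (k : ℕ) :
    (modelF^[k] p).1 ≤ towerB b k := by
  induction k with
  | zero => exact hb
  | succ k ih =>
    rw [iter_fst_succ]
    have h := Real.exp_le_exp.2 ih
    have habs : (0:ℝ) ≤ 2 * Real.pi * |(((p.2 (1 + k)).1 : ℤ) : ℝ)| := by positivity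
    show _ ≤ Real.exp (towerB b k)
    linarith

lemma coord_bound {p : ℝ × CSeq} {b : ℝ} (hp : p ∈ modelJ) (hb : p.1 ≤ b) (k : ℕ) :
    |(p.2 (k + 1)).1| ≤ ⌈towerB b (k + 1)⌉ := by
  have h0 : 0 ≤ (modelF^[k + 1] p).1 := hp (k + 1)
  rw [iter_fst_succ] at h0
  have hpp : (1:ℝ) ≤ 2 * Real.pi := by nlinarith [Real.pi_gt_three]
  have h1 : |(((p.2 (1 + k)).1 : ℤ) : ℝ)| ≤ 2 * Real.pi * |(((p.2 (1 + k)).1 : ℤ) : ℝ)| :=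
    le_mul_of_one_le_left (abs_nonneg _) hpp
  have h2 : Real.exp ((modelF^[k] p).1) ≤ Real.exp (towerB b k) :=
    Real.exp_le_exp.2 (iter_fst_le hb k)
  have h3 : |(((p.2 (1 + k)).1 : ℤ) : ℝ)| ≤ towerB b (k + 1) := by
    show _ ≤ Real.exp (towerB b k)
    linarith
  have h4 : |(((p.2 (1 + k)).1 : ℤ) : ℝ)| ≤ ((⌈towerB b (k + 1)⌉ : ℤ) : ℝ) :=
    h3.trans (Int.le_ceil _)
  have h5 : |(p.2 (1 + k)).1| ≤ ⌈towerB b (k + 1)⌉ := by exact_mod_cast h4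
  have h6 : (1 : ℕ) + k = k + 1 := Nat.add_comm 1 k
  rw [h6] at h5
  exact h5

lemma isCompact_box (c : ℤ × Bool) (M : ℕ → ℤ) :
    IsCompact {s : CSeq | s 0 = c ∧ ∀ k : ℕ, |(s (k + 1)).1| ≤ M (k + 1)} := by
  rw [csTop_eq]
  have hset : {s : ℕ → ℤ × Bool | s 0 = c ∧ ∀ k : ℕ, |(s (k + 1)).1| ≤ M (k + 1)} =
      Set.univ.pi (fun n : ℕ =>
        Nat.rec ({c} : Set (ℤ × Bool)) (fun m _ => {p : ℤ × Bool | |p.1| ≤ M (m + 1)}) n) := by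
    ext s
    simp only [Set.mem_setOf_eq, Set.mem_pi, Set.mem_univ, forall_true_left, true_implies]
    constructor
    · rintro ⟨h0, h1⟩ n
      cases n with
      | zero => exact h0
      | succ m => exact h1 m
    · intro h
      exact ⟨h 0, fun k => h (k + 1)⟩
  show IsCompact {s : ℕ → ℤ × Bool | s 0 = c ∧ ∀ k : ℕ, |(s (k + 1)).1| ≤ M (k + 1)}
  rw [hset]
  apply isCompact_univ_pi
  intro n
  cases n with
  | zero => exact isCompact_singleton
  | succ m =>
    apply Set.Finite.isCompact
    apply Set.Finite.subset ((Set.finite_Icc (-(M (m + 1))) (M (m + 1))).prod Set.finite_univ)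
    rintro ⟨z, bb⟩ hz
    simp only [Set.mem_setOf_eq] at hz
    rw [abs_le] at hz
    exact ⟨Set.mem_Icc.mpr hz, Set.mem_univ _⟩

lemma exists_compact_nhd (x : ℝ × CSeq) (hx : x ∈ modelJ) :
    ∃ K U : Set (ℝ × CSeq), IsCompact K ∧ K ⊆ modelJ ∧ IsOpen U ∧ x ∈ U ∧ U ∩ modelJ ⊆ K := by
  set b : ℝ := x.1 + 1 with hb
  set c : ℤ × Bool := x.2 0 with hc
  set S : Set CSeq :=
    {s : CSeq | s 0 = c ∧ ∀ k : ℕ, |(s (k + 1)).1| ≤ ⌈towerB b (k + 1)⌉} with hS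
  refine ⟨modelJ ∩ (Set.Icc 0 b ×ˢ S), {p : ℝ × CSeq | p.1 < b} ∩ Prod.snd ⁻¹' {s : CSeq | s 0 = c},
    ?_, Set.inter_subset_left, ?_, ?_, ?_⟩
  · exact IsCompact.inter_left (isCompact_Icc.prod (isCompact_box c (fun m => ⌈towerB b m⌉))) isClosed_modelJ
  · exact (isOpen_lt continuous_fst continuous_const).inter
      ((isOpen_coord 0 c).preimage continuous_snd)
  · exact ⟨by simp [hb], rfl⟩
  · rintro p ⟨⟨hp1, hp2⟩, hpJ⟩
    refine ⟨hpJ, ⟨⟨hpJ 0, le_of_lt hp1⟩, ⟨hp2, fun k => coord_bound hpJ (le_of_lt hp1) k⟩⟩⟩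

instance : WeaklyLocallyCompactSpace ↥modelJ := by
  constructor
  intro x
  obtain ⟨K, U, hK, hKJ, hU, hxU, hsub⟩ := exists_compact_nhd x.1 x.2
  refine ⟨Subtype.val ⁻¹' K, ?_, ?_⟩
  · rw [Topology.IsEmbedding.subtypeVal.isCompact_iff]
    rw [Subtype.image_preimage_coe]
    rwa [Set.inter_eq_self_of_subset_right hKJ]
  · rw [mem_nhds_iff]
    exact ⟨Subtype.val ⁻¹' U, fun y hy => hsub ⟨hy, y.2⟩,
      hU.preimage continuous_subtype_val, hxU⟩

lemma cocompact_CG (X : Type*) [TopologicalSpace X] [WeaklyLocallyCompactSpace X]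
    [SigmaCompactSpace X] : (Filter.cocompact X).IsCountablyGenerated := by
  let K := CompactExhaustion.choice X
  have hb : (Filter.cocompact X).HasBasis (fun _ : ℕ => True) (fun n => (K n)ᶜ) := by
    refine Filter.hasBasis_cocompact.to_hasBasis ?_ ?_
    · intro t ht
      obtain ⟨n, hn⟩ := K.exists_superset_of_isCompact ht
      exact ⟨n, trivial, Set.compl_subset_compl.mpr hn⟩
    · intro n _
      exact ⟨K n, K.isCompact n, subset_rfl⟩
  exact hb.isCountablyGenerated

/-- (Properties of the cosine model space.) `J(ℱ)` with the
subspace topology is locally compact, Hausdorff and second countable; hence its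
one-point compactification is first countable, and in particular sequential. -/
theorem modelJ_properties :
    LocallyCompactSpace ↥modelJ ∧ T2Space ↥modelJ ∧
      SecondCountableTopology ↥modelJ ∧
      FirstCountableTopology (OnePoint ↥modelJ) ∧
      SequentialSpace (OnePoint ↥modelJ) := by
  haveI h1 : T2Space ↥modelJ := inferInstance
  haveI h2 : SecondCountableTopology ↥modelJ := inferInstance
  haveI h3 : LocallyCompactSpace ↥modelJ := inferInstance
  haveI h4 : SigmaCompactSpace ↥modelJ := inferInstance
  haveI hcg : (Filter.cocompact ↥modelJ).IsCountablyGenerated := cocompact_CG _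
  haveI h5 : FirstCountableTopology (OnePoint ↥modelJ) := by
    constructor
    intro x
    cases x with
    | infty =>
      show (nhds (OnePoint.infty : OnePoint ↥modelJ)).IsCountablyGenerated
      rw [OnePoint.nhds_infty_eq, Filter.coclosedCompact_eq_cocompact]
      haveI := Filter.isCountablyGenerated_pure (OnePoint.infty : OnePoint ↥modelJ)
      infer_instance
    | coe a =>
      show (nhds ((a : ↥modelJ) : OnePoint ↥modelJ)).IsCountablyGenerated
      rw [OnePoint.nhds_coe_eq]
      infer_instance
  exact ⟨h3, h1, h2, h5, inferInstance⟩
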